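/- arXiv:1010.3619 — 3 statements merged into one kernel-verified Lean document; each statement's English description precedes it below -/
import Mathlib

section
/- For every k ≥ 0 and 0 ≤ p ≤ 1, the function L_k(p) := ((k+p)^(α+1) - k^(α+1)) / ((k+1)^(α+1) - k^(α+1)) is increasing in k; that is, for k' ≥ k'' ≥ 0 and all p ∈ [0,1], L_{k'}(p) ≥ L_{k''}(p). -/
lemma cont_shift (k α : ℝ) (hα : 0 ≤ α) : Continuous (fun t : ℝ => (k + t) ^ α) := by
  have h1 : Continuous (fun x : ℝ => x ^ α) := by
    rw [continuous_iff_continuousAt]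
    intro x
    exact Real.continuousAt_rpow_const x α (Or.inr hα)
  exact h1.comp (continuous_const.add continuous_id)

lemma integ (α k a b : ℝ) (hα : 0 < α) :
    ∫ t in a..b, (k + t) ^ α = ((k + b) ^ (α+1) - (k + a) ^ (α+1)) / (α+1) := by
  rw [intervalIntegral.integral_comp_add_left (fun x => x ^ α) k]
  exact integral_rpow (Or.inl (by linarith))

theorem stmt0 (α : ℝ) (hα : 0 < α) (k' k'' p : ℝ)
    (hk'' : 0 ≤ k'') (hkk : k'' ≤ k') (hp : p ∈ Set.Icc (0:ℝ) 1) :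
    ((k'' + p) ^ (α+1) - k'' ^ (α+1)) / ((k'' + 1) ^ (α+1) - k'' ^ (α+1)) ≤
      ((k' + p) ^ (α+1) - k' ^ (α+1)) / ((k' + 1) ^ (α+1) - k' ^ (α+1)) := by
  obtain ⟨hp0, hp1⟩ := hp
  have hk' : (0:ℝ) ≤ k' := hk''.trans hkk
  have hβ : (0:ℝ) < α + 1 := by linarith
  have hD : ∀ k : ℝ, 0 ≤ k → 0 < (k + 1) ^ (α+1) - k ^ (α+1) := by
    intro k hk
    have := Real.rpow_lt_rpow hk (by linarith : k < k + 1) hβ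
    linarith
  rcases eq_or_lt_of_le hp0 with hp0' | hp0'
  · rw [← hp0']
    simp only [add_zero, sub_self, zero_div]
    exact le_refl 0
  -- p > 0 now
  rw [div_le_div_iff₀ (hD k'' hk'') (hD k' hk')]
  set A' := ∫ s in (0:ℝ)..p, (k' + s) ^ α with hA'
  set A'' := ∫ s in (0:ℝ)..p, (k'' + s) ^ α with hA''
  set B' := ∫ t in p..(1:ℝ), (k' + t) ^ α with hB'
  set B'' := ∫ t in p..(1:ℝ), (k'' + t) ^ α with hB''
  have e1 : (k'' + p) ^ (α+1) - k'' ^ (α+1) = (α+1) * A'' := by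
    rw [hA'', integ α k'' 0 p hα, add_zero]
    field_simp
  have e2 : (k' + p) ^ (α+1) - k' ^ (α+1) = (α+1) * A' := by
    rw [hA', integ α k' 0 p hα, add_zero]
    field_simp
  have e3 : (k' + 1) ^ (α+1) - k' ^ (α+1) = (α+1) * (A' + B') := by
    rw [hA', hB', integ α k' 0 p hα, integ α k' p 1 hα, add_zero]
    field_simp
    ring
  have e4 : (k'' + 1) ^ (α+1) - k'' ^ (α+1) = (α+1) * (A'' + B'') := by
    rw [hA'', hB'', integ α k'' 0 p hα, integ α k'' p 1 hα, add_zero]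
    field_simp
    ring
  rw [e1, e2, e3, e4]
  -- integrability
  have hint : ∀ (k a b : ℝ), IntervalIntegrable (fun t : ℝ => (k + t) ^ α) MeasureTheory.volume a b :=
    fun k a b => (cont_shift k α hα.le).intervalIntegrable a b
  have hintc : ∀ (k c a b : ℝ), IntervalIntegrable (fun t : ℝ => (k + t) ^ α * c) MeasureTheory.volume a b :=
    fun k c a b => (hint k a b).mul_const c
  -- nonnegativity of integrals
  have hAnn : 0 ≤ A' := intervalIntegral.integral_nonneg hp0
    (fun x hx => Real.rpow_nonneg (by linarith [hx.1] : (0:ℝ) ≤ k' + x) α)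
  have hAnn'' : 0 ≤ A'' := intervalIntegral.integral_nonneg hp0
    (fun x hx => Real.rpow_nonneg (by linarith [hx.1] : (0:ℝ) ≤ k'' + x) α)
  have hBnn : 0 ≤ B' := intervalIntegral.integral_nonneg hp1
    (fun x hx => Real.rpow_nonneg (by linarith [hx.1] : (0:ℝ) ≤ k' + x) α)
  -- pointwise rpow product comparison
  have key_pt : ∀ a b c d : ℝ, 0 ≤ a → 0 ≤ b → 0 ≤ c → 0 ≤ d → a * b ≤ c * d →
      a ^ α * b ^ α ≤ c ^ α * d ^ α := by
    intro a b c d ha hb hc hd h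
    rw [← Real.mul_rpow ha hb, ← Real.mul_rpow hc hd]
    exact Real.rpow_le_rpow (mul_nonneg ha hb) h hα.le
  have hkp' : (0:ℝ) < k' + p := by linarith
  have hkp'' : (0:ℝ) < k'' + p := by linarith
  -- h1 : A'' * (k'+p)^α ≤ A' * (k''+p)^α
  have h1 : A'' * (k' + p) ^ α ≤ A' * (k'' + p) ^ α := by
    rw [hA', hA'', ← intervalIntegral.integral_mul_const, ← intervalIntegral.integral_mul_const]
    apply intervalIntegral.integral_mono_on hp0 (hintc k'' ((k'+p)^α) 0 p)
      (hintc k' ((k''+p)^α) 0 p)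
    intro x hx
    exact key_pt _ _ _ _ (by linarith [hx.1]) hkp'.le (by linarith [hx.1]) hkp''.le
      (by nlinarith [hx.1, hx.2])
  -- h2 : B' * (k''+p)^α ≤ B'' * (k'+p)^α
  have h2 : B' * (k'' + p) ^ α ≤ B'' * (k' + p) ^ α := by
    rw [hB', hB'', ← intervalIntegral.integral_mul_const, ← intervalIntegral.integral_mul_const]
    apply intervalIntegral.integral_mono_on hp1 (hintc k' ((k''+p)^α) p 1)
      (hintc k'' ((k'+p)^α) p 1)
    intro x hx
    exact key_pt _ _ _ _ (by linarith [hx.1]) hkp''.le (by linarith [hx.1]) hkp'.le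
      (by nlinarith [hx.1, hx.2])
  have hrp : (0:ℝ) < (k' + p) ^ α := Real.rpow_pos_of_pos hkp' α
  have hrp'' : (0:ℝ) < (k'' + p) ^ α := Real.rpow_pos_of_pos hkp'' α
  have key : A'' * B' ≤ A' * B'' := by
    have c1 : A'' * B' * ((k' + p) ^ α * (k'' + p) ^ α) ≤
        A' * B'' * ((k' + p) ^ α * (k'' + p) ^ α) := by
      nlinarith [mul_le_mul h1 h2 (mul_nonneg hBnn hrp''.le) (mul_nonneg hAnn hrp''.le)]
    exact le_of_mul_le_mul_right c1 (mul_pos hrp hrp'')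
  nlinarith [key, mul_pos hβ hβ, hAnn, hAnn'', hBnn, sq_nonneg (A' - A''), mul_le_mul_of_nonneg_left key (le_of_lt (mul_pos hβ hβ))]
end

section
/- For α > 0, k ≥ 0 and p ∈ [0,1], the quantity (k+p)^α ((k+1)^α (1-p) + k^α p) - k^α (k+1)^α is nonnegative, and is strictly positive for p ∈ (0,1) and k > 0. -/
open Real

/-- Strict two-point weighted AM-GM. -/
lemma geom_lt_arith2 {w₁ w₂ x y : ℝ} (hw₁ : 0 < w₁) (hw₂ : 0 < w₂)
    (hx : 0 < x) (hy : 0 < y) (hw : w₁ + w₂ = 1) (hxy : x ≠ y) :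
    x ^ w₁ * y ^ w₂ < w₁ * x + w₂ * y := by
  have hlog : Real.log x ≠ Real.log y := fun h => hxy (by
    rw [← Real.exp_log hx, ← Real.exp_log hy, h])
  have := strictConvexOn_exp.2 (Set.mem_univ (Real.log x)) (Set.mem_univ (Real.log y)) hlog hw₁ hw₂ hw
  simp only [smul_eq_mul] at this
  rw [Real.rpow_def_of_pos hx, Real.rpow_def_of_pos hy, ← Real.exp_add]
  rw [Real.exp_log hx, Real.exp_log hy] at this
  convert this using 2
  · rfl
  ring

/-- Key inequality for positive k. -/
lemma key_ineq {α k p : ℝ} (hα : 0 < α) (hk : 0 < k) (hp0 : 0 ≤ p) (hp1 : p ≤ 1) :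
    0 ≤ (k + p) ^ α * ((k + 1) ^ α * (1 - p) + k ^ α * p) - k ^ α * (k + 1) ^ α := by
  have hc : 0 < k + p := by linarith
  have hk1 : 0 < k + 1 := by linarith
  set u : ℝ := (k + p) / k with hu
  set v : ℝ := (k + p) / (k + 1) with hv
  have hupos : 0 < u := div_pos hc hk
  have hvpos : 0 < v := div_pos hc hk1
  -- inverse AM-GM: (1/u)^(1-p) * (1/v)^p ≤ (1-p)/u + p/v = 1
  have hsum : (1 - p) * u⁻¹ + p * v⁻¹ = 1 := by
    rw [hu, hv]; field_simp; ring
  have h1 : u⁻¹ ^ (1 - p) * v⁻¹ ^ p ≤ 1 := by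
    calc u⁻¹ ^ (1 - p) * v⁻¹ ^ p ≤ (1 - p) * u⁻¹ + p * v⁻¹ :=
          Real.geom_mean_le_arith_mean2_weighted (by linarith) hp0
            (inv_nonneg.2 hupos.le) (inv_nonneg.2 hvpos.le) (by ring)
      _ = 1 := hsum
  have hprodpos : 0 < u ^ (1 - p) * v ^ p :=
    mul_pos (Real.rpow_pos_of_pos hupos _) (Real.rpow_pos_of_pos hvpos _)
  have h2 : 1 ≤ u ^ (1 - p) * v ^ p := by
    rw [Real.inv_rpow hupos.le, Real.inv_rpow hvpos.le, ← mul_inv] at h1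
    nlinarith [mul_le_mul_of_nonneg_left h1 hprodpos.le, mul_inv_cancel₀ hprodpos.ne']
  have h3 : 1 ≤ (1 - p) * u ^ α + p * v ^ α := by
    calc (1:ℝ) = 1 ^ α := (Real.one_rpow α).symm
      _ ≤ (u ^ (1 - p) * v ^ p) ^ α := Real.rpow_le_rpow zero_le_one h2 hα.le
      _ = (u ^ α) ^ (1 - p) * (v ^ α) ^ p := by
          rw [Real.mul_rpow (Real.rpow_nonneg hupos.le _) (Real.rpow_nonneg hvpos.le _),
            ← Real.rpow_mul hupos.le, ← Real.rpow_mul hvpos.le,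
            ← Real.rpow_mul hupos.le, ← Real.rpow_mul hvpos.le, mul_comm (1-p) α, mul_comm p α]
      _ ≤ (1 - p) * u ^ α + p * v ^ α :=
          Real.geom_mean_le_arith_mean2_weighted (by linarith) hp0
            (Real.rpow_nonneg hupos.le _) (Real.rpow_nonneg hvpos.le _) (by ring)
  have hK : (0:ℝ) < k ^ α := Real.rpow_pos_of_pos hk _
  have hM : (0:ℝ) < (k + 1) ^ α := Real.rpow_pos_of_pos hk1 _
  have hC : (0:ℝ) < (k + p) ^ α := Real.rpow_pos_of_pos hc _
  have huα : u ^ α = (k + p) ^ α / k ^ α := by rw [hu, Real.div_rpow hc.le hk.le]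
  have hvα : v ^ α = (k + p) ^ α / (k + 1) ^ α := by rw [hv, Real.div_rpow hc.le hk1.le]
  rw [huα, hvα] at h3
  have h4 := mul_le_mul_of_nonneg_left h3 (mul_pos hK hM).le
  rw [mul_one] at h4
  field_simp at h4
  nlinarith [h4]


/-- Strict key inequality. -/
lemma key_lt {α k p : ℝ} (hα : 0 < α) (hk : 0 < k) (hp0 : 0 < p) (hp1 : p < 1) :
    0 < (k + p) ^ α * ((k + 1) ^ α * (1 - p) + k ^ α * p) - k ^ α * (k + 1) ^ α := by
  have hc : 0 < k + p := by linarith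
  have hk1 : 0 < k + 1 := by linarith
  set u : ℝ := (k + p) / k with hu
  set v : ℝ := (k + p) / (k + 1) with hv
  have hupos : 0 < u := div_pos hc hk
  have hvpos : 0 < v := div_pos hc hk1
  have hsum : (1 - p) * u⁻¹ + p * v⁻¹ = 1 := by
    rw [hu, hv]; field_simp; ring
  have hne : u⁻¹ ≠ v⁻¹ := by
    rw [hu, hv]
    intro h
    rw [inv_div, inv_div] at h
    field_simp at h
    linarith
  have h1 : u⁻¹ ^ (1 - p) * v⁻¹ ^ p < 1 := by
    calc u⁻¹ ^ (1 - p) * v⁻¹ ^ p < (1 - p) * u⁻¹ + p * v⁻¹ :=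
          geom_lt_arith2 (by linarith) hp0 (inv_pos.2 hupos) (inv_pos.2 hvpos) (by ring) hne
      _ = 1 := hsum
  have hprodpos : 0 < u ^ (1 - p) * v ^ p :=
    mul_pos (Real.rpow_pos_of_pos hupos _) (Real.rpow_pos_of_pos hvpos _)
  have h2 : 1 < u ^ (1 - p) * v ^ p := by
    rw [Real.inv_rpow hupos.le, Real.inv_rpow hvpos.le, ← mul_inv] at h1
    nlinarith [mul_lt_mul_of_pos_left h1 hprodpos, mul_inv_cancel₀ hprodpos.ne']
  have h3 : 1 < (1 - p) * u ^ α + p * v ^ α := by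
    calc (1:ℝ) = 1 ^ α := (Real.one_rpow α).symm
      _ < (u ^ (1 - p) * v ^ p) ^ α := Real.rpow_lt_rpow zero_le_one h2 hα
      _ = (u ^ α) ^ (1 - p) * (v ^ α) ^ p := by
          rw [Real.mul_rpow (Real.rpow_nonneg hupos.le _) (Real.rpow_nonneg hvpos.le _),
            ← Real.rpow_mul hupos.le, ← Real.rpow_mul hvpos.le,
            ← Real.rpow_mul hupos.le, ← Real.rpow_mul hvpos.le, mul_comm (1-p) α, mul_comm p α]
      _ ≤ (1 - p) * u ^ α + p * v ^ α :=
          Real.geom_mean_le_arith_mean2_weighted (by linarith) hp0.le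
            (Real.rpow_nonneg hupos.le _) (Real.rpow_nonneg hvpos.le _) (by ring)
  have hK : (0:ℝ) < k ^ α := Real.rpow_pos_of_pos hk _
  have hM : (0:ℝ) < (k + 1) ^ α := Real.rpow_pos_of_pos hk1 _
  have hC : (0:ℝ) < (k + p) ^ α := Real.rpow_pos_of_pos hc _
  have huα : u ^ α = (k + p) ^ α / k ^ α := by rw [hu, Real.div_rpow hc.le hk.le]
  have hvα : v ^ α = (k + p) ^ α / (k + 1) ^ α := by rw [hv, Real.div_rpow hc.le hk1.le]
  rw [huα, hvα] at h3
  have h4 := mul_lt_mul_of_pos_left h3 (mul_pos hK hM)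
  rw [mul_one] at h4
  field_simp at h4
  nlinarith [h4]

theorem stmt1 (α k p : ℝ) (hα : 0 < α) (hk : 0 ≤ k) (hp : p ∈ Set.Icc (0:ℝ) 1) :
    0 ≤ (k + p) ^ α * ((k + 1) ^ α * (1 - p) + k ^ α * p) - k ^ α * (k + 1) ^ α ∧
    (p ∈ Set.Ioo (0:ℝ) 1 → 0 < k →
      0 < (k + p) ^ α * ((k + 1) ^ α * (1 - p) + k ^ α * p) - k ^ α * (k + 1) ^ α) := by
  obtain ⟨hp0, hp1⟩ := hp
  constructor
  · rcases eq_or_lt_of_le hk with hk0 | hkpos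
    · rw [← hk0]
      simp only [zero_add, Real.one_rpow, Real.zero_rpow hα.ne', zero_mul, add_zero,
        one_mul, mul_zero, sub_zero]
      exact mul_nonneg (Real.rpow_nonneg hp0 _) (by linarith)
    · exact key_ineq hα hkpos hp0 hp1
  · intro hpo hkpos
    exact key_lt hα hkpos hpo.1 hpo.2
end

section
/- For α > 0 there exists M' > 0 such that for all integers t ≥ 1 and all real k ≥ 0, t·((k+1)t)^α / (∑_{l=⌈kt⌉+1}^{⌊(k+1)t⌋} l^α) ≤ M'. -/
theorem stmt19 (α : ℝ) (hα : 0 < α) :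
    ∃ M > (0:ℝ), ∀ t : ℕ, 1 ≤ t → ∀ k : ℝ, 0 ≤ k →
      (t : ℝ) * ((k + 1) * t) ^ α / (∑ l ∈ Finset.Icc (⌈k * t⌉₊ + 1) ⌊(k + 1) * t⌋₊, (l : ℝ) ^ α)
        ≤ M := by
  refine ⟨4 * 4 ^ α, by positivity, ?_⟩
  intro t ht k hk
  set m := ⌈k * t⌉₊ with hm
  set N := ⌊(k + 1) * t⌋₊ with hN
  by_cases hne : m + 1 ≤ N
  case neg =>
    rw [Finset.Icc_eq_empty (by omega), Finset.sum_empty, div_zero]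
    positivity
  set p := (m + N + 2) / 2 with hp
  have hp1 : m + 1 ≤ p := by omega
  have hp2 : p ≤ N := by omega
  have h2p : N ≤ 2 * p := by omega
  have h2p' : 2 * p ≤ m + N + 2 := by omega
  have ht1 : (1:ℝ) ≤ (t:ℝ) := by exact_mod_cast ht
  have hkt0 : (0:ℝ) ≤ (k + 1) * t := by positivity
  have hN1 : (1:ℝ) ≤ (N:ℝ) := by exact_mod_cast Nat.one_le_iff_ne_zero.mpr (by omega)
  have hktN : (k + 1) * t ≤ 2 * N := by
    have h1 : (k + 1) * t < (N:ℝ) + 1 := Nat.lt_floor_add_one _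
    linarith
  have hmR : (m:ℝ) < k * t + 1 := Nat.ceil_lt_add_one (by positivity)
  have hNR : k * t + t - 1 < (N:ℝ) := by
    have h := Nat.sub_one_lt_floor ((k + 1) * t)
    calc k * t + t - 1 = (k + 1) * t - 1 := by ring
      _ < (N:ℝ) := h
  have hcount : (t:ℝ) / 4 ≤ ((N + 1 - p : ℕ) : ℝ) := by
    have hc1 : (1:ℝ) ≤ ((N + 1 - p : ℕ) : ℝ) := by
      exact_mod_cast Nat.one_le_iff_ne_zero.mpr (by omega)
    have hcast : ((N + 1 - p : ℕ) : ℝ) = (N:ℝ) + 1 - p := by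
      have : p ≤ N + 1 := by omega
      push_cast [this]
      ring
    have hpR : (p:ℝ) ≤ ((m:ℝ) + N + 2) / 2 := by
      have : ((2 * p : ℕ) : ℝ) ≤ ((m + N + 2 : ℕ) : ℝ) := by exact_mod_cast h2p'
      push_cast at this
      linarith
    have hc2 : ((N:ℝ) - m) / 2 ≤ ((N + 1 - p : ℕ) : ℝ) := by
      rw [hcast]; linarith
    rcases le_or_gt (t:ℝ) 4 with h | h
    · linarith
    · have : (t:ℝ) - 2 ≤ (N:ℝ) - m := by linarith
      linarith
  have hpN : (N:ℝ) / 2 ≤ (p:ℝ) := by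
    have : (N:ℝ) ≤ 2 * p := by exact_mod_cast h2p
    linarith
  have hterm : ∀ l ∈ Finset.Icc p N, ((N:ℝ) / 2) ^ α ≤ (l:ℝ) ^ α := by
    intro l hl
    have hl1 := (Finset.mem_Icc.mp hl).1
    have hlp : (p:ℝ) ≤ (l:ℝ) := by exact_mod_cast hl1
    exact Real.rpow_le_rpow (by positivity) (le_trans hpN hlp) hα.le
  have hsum1 : ((N + 1 - p : ℕ) : ℝ) * ((N:ℝ) / 2) ^ α ≤ ∑ l ∈ Finset.Icc p N, (l:ℝ) ^ α := by
    have h := Finset.card_nsmul_le_sum (Finset.Icc p N) (fun l => (l:ℝ) ^ α)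
      (((N:ℝ) / 2) ^ α) hterm
    rwa [Nat.card_Icc, nsmul_eq_mul] at h
  have hsum2 : ∑ l ∈ Finset.Icc p N, (l:ℝ) ^ α ≤ ∑ l ∈ Finset.Icc (m + 1) N, (l:ℝ) ^ α :=
    Finset.sum_le_sum_of_subset_of_nonneg (Finset.Icc_subset_Icc hp1 le_rfl)
      (fun i _ _ => by positivity)
  have hS : (t:ℝ) / 4 * ((N:ℝ) / 2) ^ α ≤ ∑ l ∈ Finset.Icc (m + 1) N, (l:ℝ) ^ α :=
    calc (t:ℝ) / 4 * ((N:ℝ) / 2) ^ α ≤ ((N + 1 - p : ℕ) : ℝ) * ((N:ℝ) / 2) ^ α :=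
          mul_le_mul_of_nonneg_right hcount (by positivity)
      _ ≤ _ := le_trans hsum1 hsum2
  have hSpos : 0 < ∑ l ∈ Finset.Icc (m + 1) N, (l:ℝ) ^ α := by
    have h0 : 0 < (t:ℝ) / 4 * ((N:ℝ) / 2) ^ α := by positivity
    linarith
  rw [div_le_iff₀ hSpos]
  have hkey : (4:ℝ) ^ α * ((N:ℝ) / 2) ^ α = (2 * N) ^ α := by
    rw [← Real.mul_rpow (by norm_num) (by positivity)]
    ring_nf
  calc (t:ℝ) * ((k + 1) * t) ^ α ≤ (t:ℝ) * (2 * N) ^ α :=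
        mul_le_mul_of_nonneg_left (Real.rpow_le_rpow hkt0 hktN hα.le) (by positivity)
    _ = 4 * 4 ^ α * ((t:ℝ) / 4 * ((N:ℝ) / 2) ^ α) := by rw [← hkey]; ring
    _ ≤ 4 * 4 ^ α * ∑ l ∈ Finset.Icc (m + 1) N, (l:ℝ) ^ α :=
        mul_le_mul_of_nonneg_left hS (by positivity)
end
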